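/- For matrices of size n₁ × n₂ (d = 2), let I₂ ⊆ ℝ[x_{ij}] be generated by Σ_{i,j} x_{ij}² − 1 together with all 2×2 minors x_{ij}x_{kl} − x_{il}x_{kj} (i < k, j < l). Then the real point y = e₁e₁ᵀ (i.e., x₁₁ = 1 and all other coordinates 0) lies in the real variety of I₂, and the Jacobian matrix of the given generators at y has rank n₁·n₂ − (n₁ + n₂ − 2). -/

import Mathlib

open Matrix


open Matrix Submodule in
private lemma rank_aux16 {m n κ : Type*} [Fintype m] [Fintype n] [Finite κ] [DecidableEq m]
    (M : Matrix m n ℝ) (t : κ → m) (c : κ → ℝ) (u : κ → n)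
    (htinj : Function.Injective t) (hc : ∀ k, c k ≠ 0)
    (hcol : ∀ k, Mᵀ (u k) = fun r => if r = t k then c k else 0)
    (hzero : ∀ p, (∀ k, p ≠ u k) → Mᵀ p = 0) :
    M.rank = Nat.card κ := by
  classical
  cases nonempty_fintype κ
  have hspan : span ℝ (Set.range Mᵀ) =
      span ℝ (Set.range fun k => (Pi.single (t k) 1 : m → ℝ)) := by
    apply le_antisymm <;> rw [Submodule.span_le]
    · rintro _ ⟨p, rfl⟩
      by_cases h : ∃ k, p = u k
      · obtain ⟨k, rfl⟩ := h
        rw [hcol k]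
        have he : (fun r => if r = t k then c k else 0) =
            c k • (Pi.single (t k) 1 : m → ℝ) := by
          funext r
          by_cases hr : r = t k <;> simp [hr, Pi.single_apply]
        rw [he]
        exact Submodule.smul_mem _ _ (Submodule.subset_span ⟨k, rfl⟩)
      · push_neg at h
        rw [hzero p h]
        exact Submodule.zero_mem _
    · rintro _ ⟨k, rfl⟩
      have he : (Pi.single (t k) 1 : m → ℝ) = (c k)⁻¹ • Mᵀ (u k) := by
        rw [hcol k]
        funext r
        by_cases hr : r = t k <;> simp [hr, Pi.single_apply, inv_mul_cancel₀ (hc k)]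
      show (Pi.single (t k) 1 : m → ℝ) ∈ _
      rw [he]
      exact Submodule.smul_mem _ _ (Submodule.subset_span ⟨u k, rfl⟩)
  have hli : LinearIndependent ℝ (fun k => (Pi.single (t k) 1 : m → ℝ)) := by
    have he : (fun k => (Pi.single (t k) 1 : m → ℝ)) = (Pi.basisFun ℝ m) ∘ t := by
      funext k; simp
    rw [he]
    exact (Pi.basisFun ℝ m).linearIndependent.comp t htinj
  rw [Matrix.rank_eq_finrank_span_cols, show M.col = Mᵀ from rfl, hspan, finrank_span_eq_card hli,
    Nat.card_eq_fintype_card]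

/-- For `n₁ × n₂` matrices, with `I₂ = ⟨Σ x_{ij}² − 1, 2×2 minors⟩`, the point
`y = e₁e₁ᵀ` lies in the real variety of `I₂`, and the Jacobian of the given
generators at `y` has rank `n₁n₂ − (n₁ + n₂ − 2)`. -/
theorem stmt_16 (n₁ n₂ : ℕ) (h₁ : 0 < n₁) (h₂ : 0 < n₂)
    (gen : Option {q : (Fin n₁ × Fin n₁) × (Fin n₂ × Fin n₂) //
        q.1.1 < q.1.2 ∧ q.2.1 < q.2.2} →
      MvPolynomial (Fin n₁ × Fin n₂) ℝ)
    (hgen : gen = fun r => r.elim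
      ((∑ p : Fin n₁ × Fin n₂, (MvPolynomial.X p) ^ 2) - 1)
      (fun q => MvPolynomial.X (q.1.1.1, q.1.2.1) * MvPolynomial.X (q.1.1.2, q.1.2.2) -
        MvPolynomial.X (q.1.1.1, q.1.2.2) * MvPolynomial.X (q.1.1.2, q.1.2.1)))
    (I₂ : Ideal (MvPolynomial (Fin n₁ × Fin n₂) ℝ))
    (hI₂ : I₂ = Ideal.span (Set.range gen))
    (y : Fin n₁ × Fin n₂ → ℝ)
    (hy : y = Pi.single ((⟨0, h₁⟩ : Fin n₁), (⟨0, h₂⟩ : Fin n₂)) 1) :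
    y ∈ MvPolynomial.zeroLocus ℝ I₂ ∧
    Matrix.rank (Matrix.of fun r p =>
        MvPolynomial.eval y (MvPolynomial.pderiv p (gen r))) =
      n₁ * n₂ - (n₁ + n₂ - 2) := by
  classical
  subst hgen hI₂ hy
  set z : Fin n₁ × Fin n₂ := (⟨0, h₁⟩, ⟨0, h₂⟩) with hz
  set Q := {q : (Fin n₁ × Fin n₁) × (Fin n₂ × Fin n₂) //
      q.1.1 < q.1.2 ∧ q.2.1 < q.2.2} with hQ
  have hyval : ∀ p, (Pi.single z 1 : Fin n₁ × Fin n₂ → ℝ) p = if p = z then 1 else 0 := by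
    intro p
    by_cases h : p = z
    · subst h; simp
    · simp [h, Pi.single_eq_of_ne h]
  constructor
  · rw [MvPolynomial.mem_zeroLocus_iff]
    intro p hp
    have hle : Ideal.span (Set.range (fun r : Option Q => r.elim
        ((∑ p : Fin n₁ × Fin n₂, (MvPolynomial.X p : MvPolynomial (Fin n₁ × Fin n₂) ℝ) ^ 2) - 1)
        (fun q => MvPolynomial.X (q.1.1.1, q.1.2.1) * MvPolynomial.X (q.1.1.2, q.1.2.2) -
          MvPolynomial.X (q.1.1.1, q.1.2.2) * MvPolynomial.X (q.1.1.2, q.1.2.1)))) ≤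
        MvPolynomial.vanishingIdeal ℝ {(Pi.single z 1 : Fin n₁ × Fin n₂ → ℝ)} := by
      rw [Ideal.span_le]
      rintro _ ⟨r, rfl⟩
      rw [SetLike.mem_coe, MvPolynomial.mem_vanishingIdeal_iff]
      rintro x rfl
      change MvPolynomial.eval (Pi.single z 1) _ = 0
      cases r with
      | none =>
        simp only [Option.elim, _root_.map_sub, _root_.map_sum, _root_.map_pow, MvPolynomial.eval_X,
          _root_.map_one, hyval]
        rw [Finset.sum_eq_single z]
        · simp
        · intro b _ hb; simp [hb]
        · simp
      | some q =>
        obtain ⟨⟨⟨i1, i2⟩, j1, j2⟩, hi, hj⟩ := q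
        have hb : ((i2, j2) : Fin n₁ × Fin n₂) ≠ z := by
          intro h
          rw [Prod.mk.injEq] at h
          rw [h.1] at hi
          simp [Fin.lt_def] at hi
        have hd : ((i2, j1) : Fin n₁ × Fin n₂) ≠ z := by
          intro h
          rw [Prod.mk.injEq] at h
          rw [h.1] at hi
          simp [Fin.lt_def] at hi
        simp only [Option.elim, _root_.map_sub, _root_.map_mul, MvPolynomial.eval_X, hyval]
        simp [hb, hd]
    exact MvPolynomial.mem_vanishingIdeal_iff.mp (hle hp) _ rfl
  · have hn₁' : ∀ i : Fin (n₁ - 1), i.val + 1 < n₁ := fun i => by omega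
    have hn₂' : ∀ j : Fin (n₂ - 1), j.val + 1 < n₂ := fun j => by omega
    set t : Option (Fin (n₁ - 1) × Fin (n₂ - 1)) → Option Q := fun k =>
      k.elim none (fun ij => some ⟨((⟨0, h₁⟩, ⟨ij.1.val + 1, hn₁' ij.1⟩),
        (⟨0, h₂⟩, ⟨ij.2.val + 1, hn₂' ij.2⟩)), by
          constructor <;> simp [Fin.lt_def]⟩) with ht
    set c : Option (Fin (n₁ - 1) × Fin (n₂ - 1)) → ℝ := fun k => k.elim 2 (fun _ => 1) with hc'
    set u : Option (Fin (n₁ - 1) × Fin (n₂ - 1)) → Fin n₁ × Fin n₂ := fun k =>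
      k.elim z (fun ij => (⟨ij.1.val + 1, hn₁' ij.1⟩, ⟨ij.2.val + 1, hn₂' ij.2⟩)) with hu
    have htinj : Function.Injective t := by
      rintro (_ | ⟨i, j⟩) (_ | ⟨i', j'⟩) h
      · rfl
      · exact absurd h (by simp [ht])
      · exact absurd h (by simp [ht])
      · simp only [ht, Option.elim] at h
        have h' := Subtype.ext_iff.mp (Option.some_injective _ h)
        simp only [Prod.ext_iff, Fin.mk.injEq, Fin.val_mk] at h'
        obtain ⟨⟨-, h2⟩, -, h4⟩ := h'
        exact congrArg some (Prod.ext (show i = i' from Fin.ext (by omega)) (show j = j' from Fin.ext (by omega)))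
    have hcne : ∀ k, c k ≠ 0 := by rintro (_ | k) <;> simp [hc']
    -- entry computations
    have hE0 : ∀ p : Fin n₁ × Fin n₂, MvPolynomial.eval (Pi.single z 1) (MvPolynomial.pderiv p
        ((∑ q : Fin n₁ × Fin n₂,
          (MvPolynomial.X q : MvPolynomial (Fin n₁ × Fin n₂) ℝ) ^ 2) - 1)) =
        if p = z then 2 else 0 := by
      intro p
      rw [_root_.map_sub, _root_.map_sum]
      simp only [MvPolynomial.pderiv_pow, MvPolynomial.pderiv_X, MvPolynomial.pderiv_one,
        _root_.map_sub, _root_.map_zero, _root_.map_sum, _root_.map_mul, _root_.map_pow, MvPolynomial.eval_X, Pi.single_apply]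
      rw [Finset.sum_eq_single p]
      · by_cases h : p = z <;> simp [h, hyval, Pi.single_eq_of_ne]
      · intro b _ hb
        simp [hb]
      · simp
    have hE1 : ∀ (q : Q) (p : Fin n₁ × Fin n₂),
        MvPolynomial.eval (Pi.single z 1) (MvPolynomial.pderiv p
          ((MvPolynomial.X (q.1.1.1, q.1.2.1) : MvPolynomial (Fin n₁ × Fin n₂) ℝ) * MvPolynomial.X (q.1.1.2, q.1.2.2) -
            MvPolynomial.X (q.1.1.1, q.1.2.2) * MvPolynomial.X (q.1.1.2, q.1.2.1))) =
        if q.1.1.1 = (⟨0, h₁⟩ : Fin n₁) ∧ q.1.2.1 = (⟨0, h₂⟩ : Fin n₂) ∧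
            p = (q.1.1.2, q.1.2.2) then 1 else 0 := by
      rintro ⟨⟨⟨i1, i2⟩, j1, j2⟩, hi, hj⟩ p
      have hi' : i1 < i2 := hi
      have hj' : j1 < j2 := hj
      have hi2 : i2.val ≠ 0 := by rw [Fin.lt_def] at hi'; omega
      have hj2 : j2.val ≠ 0 := by rw [Fin.lt_def] at hj'; omega
      have hb : ((i2, j2) : Fin n₁ × Fin n₂) ≠ z := fun h => hi2 (by
        have := congrArg Prod.fst h; simpa [hz] using congrArg Fin.val this)
      have hcz : ((i1, j2) : Fin n₁ × Fin n₂) ≠ z := fun h => hj2 (by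
        have := congrArg Prod.snd h; simpa [hz] using congrArg Fin.val this)
      have hd : ((i2, j1) : Fin n₁ × Fin n₂) ≠ z := fun h => hi2 (by
        have := congrArg Prod.fst h; simpa [hz] using congrArg Fin.val this)
      simp only [_root_.map_sub, MvPolynomial.pderiv_mul, MvPolynomial.pderiv_X, _root_.map_add, _root_.map_mul,
        MvPolynomial.eval_X, Pi.single_apply, hyval]
      rw [if_neg hb, if_neg hcz, if_neg hd]
      simp only [apply_ite (MvPolynomial.eval (Pi.single z 1)), _root_.map_one, _root_.map_zero,
        mul_zero, zero_mul, add_zero, zero_add, sub_zero]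
      by_cases hA : ((i1, j1) : Fin n₁ × Fin n₂) = z
      · rw [if_pos hA, one_mul]
        by_cases hB : ((i2, j2) : Fin n₁ × Fin n₂) = p
        · rw [if_pos hB, if_pos ⟨congrArg Prod.fst hA, congrArg Prod.snd hA, hB.symm⟩]
          simp
        · rw [if_neg hB, if_neg (fun h => hB h.2.2.symm)]
          simp
      · rw [if_neg hA, zero_mul]
        rw [if_neg (fun h => hA (Prod.ext h.1 h.2.1))]
    have hcol : ∀ k, (Matrix.of fun (r : Option Q) (p : Fin n₁ × Fin n₂) =>
        MvPolynomial.eval (Pi.single z 1) (MvPolynomial.pderiv p (Option.elim r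
          ((∑ q : Fin n₁ × Fin n₂,
            (MvPolynomial.X q : MvPolynomial (Fin n₁ × Fin n₂) ℝ) ^ 2) - 1)
          (fun q => MvPolynomial.X (q.1.1.1, q.1.2.1) * MvPolynomial.X (q.1.1.2, q.1.2.2) -
            MvPolynomial.X (q.1.1.1, q.1.2.2) * MvPolynomial.X (q.1.1.2, q.1.2.1)))))ᵀ (u k) =
        fun r => if r = t k then c k else 0 := by
      rintro (_ | ⟨i, j⟩) <;> funext r <;> rcases r with - | q <;>
        simp only [Matrix.transpose_apply, Matrix.of_apply, Option.elim, hu, ht, hc']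
      · rw [hE0 z]
        simp
      · rw [hE1 q z]
        rw [if_neg, if_neg (by simp)]
        rintro ⟨-, -, hzz⟩
        have h1 := congrArg (fun w => (Prod.fst w).val) hzz
        have hlt := q.2.1
        rw [Fin.lt_def] at hlt
        simp [hz] at h1
        omega
      · rw [hE0 ((⟨i.val + 1, hn₁' i⟩ : Fin n₁), (⟨j.val + 1, hn₂' j⟩ : Fin n₂))]
        rw [if_neg, if_neg (by simp)]
        intro h
        have := congrArg (fun w => (Prod.fst w).val) h
        simp [hz] at this
      · rw [hE1 q ((⟨i.val + 1, hn₁' i⟩ : Fin n₁), (⟨j.val + 1, hn₂' j⟩ : Fin n₂))]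
        split_ifs with hA hB hC
        · rfl
        · exfalso
          apply hB
          obtain ⟨h1, h2, h3⟩ := hA
          rw [Prod.mk.injEq] at h3
          refine congrArg some (Subtype.ext ?_)
          have e1 : (q : (Fin n₁ × Fin n₁) × (Fin n₂ × Fin n₂)).1 =
              ((⟨0, h₁⟩ : Fin n₁), (⟨i.val + 1, hn₁' i⟩ : Fin n₁)) := Prod.ext h1 h3.1.symm
          have e2 : (q : (Fin n₁ × Fin n₁) × (Fin n₂ × Fin n₂)).2 =
              ((⟨0, h₂⟩ : Fin n₂), (⟨j.val + 1, hn₂' j⟩ : Fin n₂)) := Prod.ext h2 h3.2.symm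
          exact Prod.ext e1 e2
        · exfalso
          apply hA
          have h' := Subtype.ext_iff.mp (Option.some_injective _ hC)
          refine ⟨congrArg (fun w => w.1.1) h', congrArg (fun w => w.2.1) h', ?_⟩
          rw [h']
        · rfl
    have hzero : ∀ p : Fin n₁ × Fin n₂, (∀ k, p ≠ u k) →
        (Matrix.of fun (r : Option Q) (p : Fin n₁ × Fin n₂) =>
        MvPolynomial.eval (Pi.single z 1) (MvPolynomial.pderiv p (Option.elim r
          ((∑ q : Fin n₁ × Fin n₂,
            (MvPolynomial.X q : MvPolynomial (Fin n₁ × Fin n₂) ℝ) ^ 2) - 1)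
          (fun q => MvPolynomial.X (q.1.1.1, q.1.2.1) * MvPolynomial.X (q.1.1.2, q.1.2.2) -
            MvPolynomial.X (q.1.1.1, q.1.2.2) * MvPolynomial.X (q.1.1.2, q.1.2.1)))))ᵀ p =
        0 := by
      intro p hp
      have hpz : p ≠ z := hp none
      have hdeg : p.1.val = 0 ∨ p.2.val = 0 := by
        by_contra hcon
        push_neg at hcon
        obtain ⟨hc1, hc2⟩ := hcon
        have hk1 : p.1.val - 1 < n₁ - 1 := by have := p.1.isLt; omega
        have hk2 : p.2.val - 1 < n₂ - 1 := by have := p.2.isLt; omega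
        apply hp (some (⟨p.1.val - 1, hk1⟩, ⟨p.2.val - 1, hk2⟩))
        simp only [hu, Option.elim]
        refine Prod.ext (Fin.ext ?_) (Fin.ext ?_) <;> simp <;> omega
      funext r
      rcases r with - | q <;>
        simp only [Matrix.transpose_apply, Matrix.of_apply, Option.elim, Pi.zero_apply]
      · rw [hE0 p, if_neg hpz]
      · rw [hE1 q p, if_neg]
        rintro ⟨-, -, hpp⟩
        have h1 := congrArg (fun w => (Prod.fst w).val) hpp
        have h2 := congrArg (fun w => (Prod.snd w).val) hpp
        have hlt1 := q.2.1
        have hlt2 := q.2.2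
        rw [Fin.lt_def] at hlt1 hlt2
        simp at h1 h2
        omega
    rw [rank_aux16 _ t c u htinj hcne hcol hzero]
    simp only [Nat.card_eq_fintype_card, Fintype.card_option, Fintype.card_prod,
      Fintype.card_fin]
    obtain ⟨a, rfl⟩ : ∃ a, n₁ = a + 1 := ⟨n₁ - 1, by omega⟩
    obtain ⟨b, rfl⟩ : ∃ b, n₂ = b + 1 := ⟨n₂ - 1, by omega⟩
    have hab : (a + 1) * (b + 1) = a * b + a + b + 1 := by ring
    simp only [Nat.add_sub_cancel]
    omega
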